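/- Let (X,d) be a metric space, γ a Borel measure on X with 0 < γ(B) < ∞ for every ball B, and m : X → (0,∞) an admissibility function. Let 1 ≤ q < ∞ with conjugate exponent q' (1/q + 1/q' = 1), let B = B(c,r) be a ball with 0 < r ≤ 5·m(c), and let f be a measurable function on D vanishing outside T(B). Then ∫_X A_q^1 f(x) dγ(x) ≤ γ(B)^{1/q'} · (∬_{T(B)} |f(y,t)|^q dγ(y) dt/t)^{1/q}. -/

import Mathlib

open MeasureTheory Metric ENNReal

noncomputable def tMeasure : Measure ℝ :=
  (volume : Measure ℝ).withDensity fun t => ENNReal.ofReal (1 / t)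

noncomputable def planeMeasure {X : Type*} [MeasurableSpace X] (γ : Measure X) :
    Measure (X × ℝ) := γ.prod tMeasure

def admRegion {X : Type*} (m : X → ℝ) : Set (X × ℝ) := {p | 0 < p.2 ∧ p.2 < m p.1}

def tCone {X : Type*} [PseudoMetricSpace X] (m : X → ℝ) (α : ℝ) (x : X) : Set (X × ℝ) :=
  {p | 0 < p.2 ∧ p.2 < m p.1 ∧ dist x p.1 < α * p.2}

def tentSet {X : Type*} [PseudoMetricSpace X] (m : X → ℝ) (O : Set X) : Set (X × ℝ) :=
  {p | 0 < p.2 ∧ p.2 < m p.1 ∧ Metric.ball p.1 p.2 ⊆ O}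

noncomputable def Afun {X : Type*} [PseudoMetricSpace X] [MeasurableSpace X]
    (γ : Measure X) (m : X → ℝ) (q α : ℝ) (f : X × ℝ → ℂ) (x : X) : ℝ≥0∞ :=
  (∫⁻ p in tCone m α x, (‖f p‖₊ : ℝ≥0∞) ^ q / γ (Metric.ball p.1 p.2) ∂(planeMeasure γ)) ^ (1 / q)

noncomputable def tNorm {X : Type*} [PseudoMetricSpace X] [MeasurableSpace X]
    (γ : Measure X) (m : X → ℝ) (p q α : ℝ) (f : X × ℝ → ℂ) : ℝ≥0∞ :=
  (∫⁻ x, Afun γ m q α f x ^ p ∂γ) ^ (1 / p)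

/-- A metric space carrying a measure that is positive and finite on all balls is
second countable. -/
theorem secondCountable_of_ball_measure {X : Type*} [MetricSpace X] [MeasurableSpace X]
    [OpensMeasurableSpace X] (γ : Measure X)
    (hγ : ∀ (c : X) (r : ℝ), 0 < r → 0 < γ (ball c r) ∧ γ (ball c r) < ⊤) :
    SecondCountableTopology X := by
  rcases isEmpty_or_nonempty X with hX | hX
  · exact Metric.secondCountable_of_almost_dense_set fun ε hε =>
      ⟨∅, Set.countable_empty, fun x => isEmptyElim x⟩
  obtain ⟨c₀⟩ := hX
  refine Metric.secondCountable_of_almost_dense_set fun ε hε => ?_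
  have hchaincond : ∀ c ⊆ {s : Set X | s.Pairwise fun a b => ε ≤ dist a b},
      IsChain (· ⊆ ·) c →
      ∃ ub ∈ {s : Set X | s.Pairwise fun a b => ε ≤ dist a b}, ∀ s ∈ c, s ⊆ ub := by
    intro c hcS hchain
    refine ⟨⋃₀ c, ?_, fun s hs => Set.subset_sUnion_of_mem hs⟩
    intro a ha b hb hab
    obtain ⟨sa, hsa, hasa⟩ := ha
    obtain ⟨sb, hsb, hbsb⟩ := hb
    rcases hchain.total hsa hsb with h | h
    · exact hcS hsb (h hasa) hbsb hab
    · exact hcS hsa hasa (h hbsb) hab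
  obtain ⟨M, hM⟩ := zorn_subset {s : Set X | s.Pairwise fun a b => ε ≤ dist a b} hchaincond
  have hMS : M.Pairwise fun a b => ε ≤ dist a b := hM.prop
  have hsymm : Symmetric fun a b : X => ε ≤ dist a b := by
    intro a b h; rwa [dist_comm]
  have hnet : ∀ x, ∃ y ∈ M, dist x y ≤ ε := by
    intro x
    by_contra hcon
    push_neg at hcon
    have hxM : x ∉ M := by
      intro hx
      have := hcon x hx
      rw [dist_self] at this
      linarith
    have hins : (insert x M).Pairwise fun a b => ε ≤ dist a b := by
      haveI : Std.Symm (fun a b : X => ε ≤ dist a b) := ⟨fun a b h => hsymm h⟩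
      rw [Set.pairwise_insert_of_symm]
      exact ⟨hMS, fun b hb _ => (hcon b hb).le⟩
    have hsub := hM.2 hins (Set.subset_insert x M)
    exact hxM (hsub (Set.mem_insert x M))
  refine ⟨M, ?_, hnet⟩
  have hcover : M = ⋃ n : ℕ, M ∩ ball c₀ ((n : ℝ) + 1) := by
    ext x
    simp only [Set.mem_iUnion, Set.mem_inter_iff, mem_ball]
    constructor
    · intro hx
      obtain ⟨n, hn⟩ := exists_nat_gt (dist x c₀)
      exact ⟨n, hx, by linarith⟩
    · rintro ⟨n, hx, -⟩; exact hx
  rw [hcover]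
  refine Set.countable_iUnion fun n => ?_
  set Mn : Set X := M ∩ ball c₀ ((n : ℝ) + 1) with hMn
  let As : Mn → Set X := fun i => ball (i : X) (min (ε/2) (((n : ℝ) + 1) - dist (i : X) c₀))
  have hrpos : ∀ i : Mn, 0 < min (ε/2) (((n : ℝ) + 1) - dist (i : X) c₀) := by
    intro i
    have h2 : dist (i : X) c₀ < (n : ℝ) + 1 := mem_ball.mp i.2.2
    exact lt_min (by linarith) (by linarith)
  have hsub : ∀ i : Mn, As i ⊆ ball c₀ ((n : ℝ) + 1) := by
    intro i z hz
    rw [mem_ball] at hz ⊢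
    have h1 : dist z (i : X) < ((n : ℝ) + 1) - dist (i : X) c₀ :=
      lt_of_lt_of_le hz (min_le_right _ _)
    calc dist z c₀ ≤ dist z (i : X) + dist (i : X) c₀ := dist_triangle _ _ _
      _ < (n : ℝ) + 1 := by linarith
  have hdisj : Pairwise (Function.onFun Disjoint As) := by
    intro i j hij
    have hij' : (i : X) ≠ (j : X) := fun h => hij (Subtype.ext h)
    have hsep : ε ≤ dist (i : X) (j : X) := hMS i.2.1 j.2.1 hij'
    refine Disjoint.mono (ball_subset_ball (min_le_left _ _))
      (ball_subset_ball (min_le_left _ _)) ?_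
    exact ball_disjoint_ball (by linarith)
  have hfin : γ (⋃ i, As i) ≠ ⊤ := by
    refine ne_of_lt (lt_of_le_of_lt (measure_mono (Set.iUnion_subset hsub)) ?_)
    exact (hγ c₀ ((n : ℝ) + 1) (by positivity)).2
  have hcount := MeasureTheory.Measure.countable_meas_pos_of_disjoint_of_meas_iUnion_ne_top γ
    (fun i => measurableSet_ball) hdisj hfin
  have huniv : {i : Mn | 0 < γ (As i)} = Set.univ := by
    ext i
    simp only [Set.mem_setOf_eq, Set.mem_univ, iff_true]
    exact (hγ _ _ (hrpos i)).1
  rw [huniv, Set.countable_univ_iff] at hcount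
  exact Set.countable_coe_iff.mp hcount

theorem stmt12 {X : Type*} [MetricSpace X] [MeasurableSpace X] [BorelSpace X]
    (γ : Measure X)
    (hγ : ∀ (c : X) (r : ℝ), 0 < r → 0 < γ (ball c r) ∧ γ (ball c r) < ⊤)
    (m : X → ℝ) (hm : ∀ x, 0 < m x)
    (q : ℝ) (hq : 1 ≤ q)
    (f : X × ℝ → ℂ) (hf : Measurable f)
    (c : X) (r : ℝ) (hr : 0 < r) (hradm : r ≤ 5 * m c)
    (hsupp : ∀ p, p ∉ tentSet m (ball c r) → f p = 0) :
    ∫⁻ x, Afun γ m q 1 f x ∂γ ≤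
      γ (ball c r) ^ (1 - 1 / q) *
        (∫⁻ p in tentSet m (ball c r), (‖f p‖₊ : ℝ≥0∞) ^ q ∂(planeMeasure γ)) ^ (1 / q) := by
  haveI : SecondCountableTopology X := secondCountable_of_ball_measure γ hγ
  have hq0 : (0:ℝ) < q := lt_of_lt_of_le zero_lt_one hq
  have hq0' : q ≠ 0 := ne_of_gt hq0
  have hinvq : (0:ℝ) < 1/q := by positivity
  set B : Set X := ball c r with hBdef
  have hBmeas : MeasurableSet B := measurableSet_ball
  set γB : Measure X := γ.restrict B with hγBdef
  haveI : IsFiniteMeasure γB := ⟨by rw [hγBdef, Measure.restrict_apply_univ]; exact (hγ c r hr).2⟩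
  haveI : SFinite tMeasure := by unfold tMeasure; infer_instance
  set μB : Measure (X × ℝ) := γB.prod tMeasure with hμBdef
  set F : X × ℝ → ℝ≥0∞ := fun p => (‖f p‖₊ : ℝ≥0∞) ^ q with hFdef
  set G : X × ℝ → ℝ≥0∞ := fun p => F p / γB (ball p.1 p.2) with hGdef
  have hGapp : ∀ p, G p = F p / γB (ball p.1 p.2) := fun _ => rfl
  have hFapp : ∀ p, F p = (‖f p‖₊ : ℝ≥0∞) ^ q := fun _ => rfl
  -- measurability of F
  have hFmeas : Measurable F :=
    (hf.nnnorm.coe_nnreal_ennreal).pow_const q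
  -- measurability of p ↦ γB (ball p.1 p.2)
  have hballmeas : Measurable fun p : X × ℝ => γB (ball p.1 p.2) := by
    have hS : MeasurableSet {z : (X × ℝ) × X | dist z.2 z.1.1 < z.1.2} :=
      (isOpen_lt (continuous_snd.dist continuous_fst.fst) continuous_fst.snd).measurableSet
    have := measurable_measure_prodMk_left (ν := γB) hS
    exact this
  have hGmeas : Measurable G := hFmeas.div hballmeas
  -- F vanishes off the tent
  have hFzero : ∀ p, p ∉ tentSet m B → F p = 0 := by
    intro p hp
    rw [hFapp, hsupp p hp]
    simp [ENNReal.zero_rpow_of_pos hq0]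
  have htentball : ∀ p ∈ tentSet m B, ball p.1 p.2 ⊆ B := fun p hp => hp.2.2
  have hγBball : ∀ p ∈ tentSet m B, γB (ball p.1 p.2) = γ (ball p.1 p.2) := by
    intro p hp
    rw [hγBdef, Measure.restrict_apply measurableSet_ball,
      Set.inter_eq_self_of_subset_left (htentball p hp)]
  have hGeq : ∀ p, F p / γ (ball p.1 p.2) = G p := by
    intro p
    by_cases hp : p ∈ tentSet m B
    · rw [hGapp, hγBball p hp]
    · rw [hGapp, hFzero p hp]; simp
  -- G vanishes when the first coordinate is outside B
  have htentfst : ∀ p ∈ tentSet m B, p.1 ∈ B := by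
    intro p hp
    exact hp.2.2 (mem_ball_self hp.1)
  have hGvanish : ∀ p : X × ℝ, p.1 ∉ B → G p = 0 := by
    intro p hp
    have : p ∉ tentSet m B := fun h => hp (htentfst p h)
    rw [hGapp, hFzero p this]; simp
  -- comparison of measures
  have hle : μB ≤ planeMeasure γ := by
    rw [Measure.le_iff]
    intro s hs
    rw [hμBdef, planeMeasure, Measure.prod_apply hs, Measure.prod_apply hs]
    exact setLIntegral_le_lintegral _ _
  -- switching the plane measure to μB for functions vanishing off B × ℝ
  have hswitch : ∀ h : X × ℝ → ℝ≥0∞, Measurable h → (∀ p : X × ℝ, p.1 ∉ B → h p = 0) →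
      ∫⁻ p, h p ∂(planeMeasure γ) = ∫⁻ p, h p ∂μB := by
    intro h hmeas hvan
    rw [planeMeasure, lintegral_prod _ hmeas.aemeasurable, hμBdef,
      lintegral_prod _ hmeas.aemeasurable]
    have hzero : ∀ y ∉ B, ∫⁻ t, h (y, t) ∂tMeasure = 0 := by
      intro y hy
      have : ∀ t, h (y, t) = 0 := fun t => hvan (y, t) hy
      simp [this]
    calc ∫⁻ y, ∫⁻ t, h (y, t) ∂tMeasure ∂γ
        = ∫⁻ y, B.indicator (fun y => ∫⁻ t, h (y, t) ∂tMeasure) y ∂γ := by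
          refine lintegral_congr fun y => ?_
          by_cases hy : y ∈ B
          · rw [Set.indicator_of_mem hy]
          · rw [Set.indicator_of_notMem hy, hzero y hy]
      _ = ∫⁻ y in B, ∫⁻ t, h (y, t) ∂tMeasure ∂γ := lintegral_indicator hBmeas _
      _ = ∫⁻ y, ∫⁻ t, h (y, t) ∂tMeasure ∂γB := rfl
  -- the enlarged cone
  set S : X → Set (X × ℝ) := fun x => {p : X × ℝ | dist x p.1 < p.2} with hSdef
  have hSmeas : ∀ x, MeasurableSet (S x) := fun x =>
    (isOpen_lt (continuous_const.dist continuous_fst) continuous_snd).measurableSet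
  set I : X → ℝ≥0∞ := fun x => ∫⁻ p, (S x).indicator G p ∂μB with hIdef
  have hIapp : ∀ x, I x = ∫⁻ p, (S x).indicator G p ∂μB := fun _ => rfl
  -- I is measurable
  set T : Set (X × (X × ℝ)) := {z | dist z.1 z.2.1 < z.2.2} with hTdef
  have hTmeas : MeasurableSet T :=
    (isOpen_lt (continuous_fst.dist continuous_snd.fst) continuous_snd.snd).measurableSet
  have hHuncurry : Measurable fun z : X × (X × ℝ) => (S z.1).indicator G z.2 := by
    have heq : (fun z : X × (X × ℝ) => (S z.1).indicator G z.2)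
        = T.indicator (fun z => G z.2) := by
      funext z
      by_cases hz : z ∈ T
      · have hz2 : z.2 ∈ S z.1 := hz
        rw [Set.indicator_of_mem hz2 G, Set.indicator_of_mem hz (fun z => G z.2)]
      · have hz2 : z.2 ∉ S z.1 := hz
        rw [Set.indicator_of_notMem hz2 G, Set.indicator_of_notMem hz (fun z => G z.2)]
    rw [heq]
    exact (hGmeas.comp measurable_snd).indicator hTmeas
  have hImeas : Measurable I :=
    Measurable.lintegral_prod_right (f := fun x p => (S x).indicator G p) hHuncurry
  -- Afun is bounded by I ^ (1/q)
  have hAle : ∀ x, Afun γ m q 1 f x ≤ I x ^ (1/q) := by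
    intro x
    rw [Afun]
    refine ENNReal.rpow_le_rpow ?_ (le_of_lt hinvq)
    have h1 : ∫⁻ p in tCone m 1 x, (‖f p‖₊ : ℝ≥0∞) ^ q / γ (ball p.1 p.2) ∂(planeMeasure γ)
        = ∫⁻ p in tCone m 1 x, G p ∂(planeMeasure γ) :=
      lintegral_congr fun p => hGeq p
    rw [h1]
    have hsub : tCone m 1 x ⊆ S x := by
      intro p hp
      have := hp.2.2
      rwa [one_mul] at this
    calc ∫⁻ p in tCone m 1 x, G p ∂(planeMeasure γ)
        ≤ ∫⁻ p in S x, G p ∂(planeMeasure γ) :=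
          lintegral_mono' (Measure.restrict_mono hsub le_rfl) le_rfl
      _ = ∫⁻ p, (S x).indicator G p ∂(planeMeasure γ) := (lintegral_indicator (hSmeas x) _).symm
      _ = ∫⁻ p, (S x).indicator G p ∂μB := by
          refine hswitch _ (hGmeas.indicator (hSmeas x)) fun p hp => ?_
          by_cases hps : p ∈ S x
          · rw [Set.indicator_of_mem hps, hGvanish p hp]
          · rw [Set.indicator_of_notMem hps]
      _ = I x := (hIapp x).symm
  -- I vanishes outside B
  have hI0 : ∀ x, x ∉ B → I x = 0 := by
    intro x hx
    have hzero : ∀ p, (S x).indicator G p = 0 := by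
      intro p
      by_cases hps : p ∈ S x
      · rw [Set.indicator_of_mem hps]
        by_cases hpt : p ∈ tentSet m B
        · exact absurd (hpt.2.2 hps) hx
        · rw [hGapp, hFzero p hpt]; simp
      · rw [Set.indicator_of_notMem hps]
    rw [hIapp]
    simp [hzero]
  -- step 1: reduce to the ball
  have step1 : ∫⁻ x, Afun γ m q 1 f x ∂γ ≤ ∫⁻ x, I x ^ (1/q) ∂γB := by
    calc ∫⁻ x, Afun γ m q 1 f x ∂γ
        ≤ ∫⁻ x, B.indicator (fun x => I x ^ (1/q)) x ∂γ := by
          refine lintegral_mono fun x => ?_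
          by_cases hx : x ∈ B
          · rw [Set.indicator_of_mem hx]; exact hAle x
          · rw [Set.indicator_of_notMem hx]
            have h2 := hAle x
            rw [hI0 x hx, ENNReal.zero_rpow_of_pos hinvq] at h2
            exact h2
      _ = ∫⁻ x in B, I x ^ (1/q) ∂γ := lintegral_indicator hBmeas _
      _ = ∫⁻ x, I x ^ (1/q) ∂γB := rfl
  -- step 2: Hölder
  have step2 : ∫⁻ x, I x ^ (1/q) ∂γB ≤
      γ B ^ (1 - 1/q) * (∫⁻ x, I x ∂γB) ^ (1/q) := by
    have hrw : ∀ x, (I x ^ (1/q)) ^ q = I x := by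
      intro x
      rw [← ENNReal.rpow_mul, one_div_mul_cancel hq0', ENNReal.rpow_one]
    have hunivB : γB Set.univ = γ B := by rw [hγBdef, Measure.restrict_apply_univ]
    rcases eq_or_lt_of_le hq with hq1 | hq1
    · -- q = 1
      subst hq1
      norm_num
    · -- q > 1
      have hpq : q.HolderConjugate (Real.conjExponent q) := Real.HolderConjugate.conjExponent hq1
      have hconj : 1 / Real.conjExponent q = 1 - 1/q := by
        have h3 := hpq.inv_add_inv_eq_one
        rw [one_div, one_div]
        linarith
      have hAmeas : AEMeasurable (fun x => I x ^ (1/q)) γB :=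
        (hImeas.pow_const (1/q)).aemeasurable
      have hhold := ENNReal.lintegral_mul_le_Lp_mul_Lq γB hpq hAmeas
        (aemeasurable_const (b := (1:ℝ≥0∞)))
      simp only [Pi.mul_apply, mul_one, ENNReal.one_rpow, lintegral_one, hunivB] at hhold
      calc ∫⁻ x, I x ^ (1/q) ∂γB
          ≤ (∫⁻ x, (I x ^ (1/q)) ^ q ∂γB) ^ (1/q) * γ B ^ (1 / Real.conjExponent q) := hhold
        _ = γ B ^ (1 - 1/q) * (∫⁻ x, I x ∂γB) ^ (1/q) := by
            rw [hconj, mul_comm]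
            congr 2
            exact lintegral_congr hrw
  -- step 3: core Fubini computation
  have step3 : ∫⁻ x, I x ∂γB ≤
      ∫⁻ p in tentSet m B, F p ∂(planeMeasure γ) := by
    have hswap : ∫⁻ x, I x ∂γB
        = ∫⁻ p, ∫⁻ x, (S x).indicator G p ∂γB ∂μB :=
      lintegral_lintegral_swap (μ := γB) (ν := μB)
        (f := fun x p => (S x).indicator G p) hHuncurry.aemeasurable
    rw [hswap]
    have hinner : ∀ p : X × ℝ, ∫⁻ x, (S x).indicator G p ∂γB = G p * γB (ball p.1 p.2) := by
      intro p
      have hpt : ∀ x, (S x).indicator G p = (ball p.1 p.2).indicator (fun _ => G p) x := by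
        intro x
        by_cases hx : p ∈ S x
        · have hx2 : x ∈ ball p.1 p.2 := mem_ball.mpr hx
          rw [Set.indicator_of_mem hx G, Set.indicator_of_mem hx2 (fun _ => G p)]
        · have hx2 : x ∉ ball p.1 p.2 := fun h => hx (mem_ball.mp h)
          rw [Set.indicator_of_notMem hx G, Set.indicator_of_notMem hx2 (fun _ => G p)]
      calc ∫⁻ x, (S x).indicator G p ∂γB
          = ∫⁻ x, (ball p.1 p.2).indicator (fun _ => G p) x ∂γB := lintegral_congr hpt
        _ = G p * γB (ball p.1 p.2) := lintegral_indicator_const measurableSet_ball _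
    have hptle : ∀ p : X × ℝ, G p * γB (ball p.1 p.2) ≤ (tentSet m B).indicator F p := by
      intro p
      by_cases hp : p ∈ tentSet m B
      · rw [Set.indicator_of_mem hp, hGapp, hγBball p hp]
        have h0 := (hγ p.1 p.2 hp.1).1
        have htop := (hγ p.1 p.2 hp.1).2
        exact le_of_eq (ENNReal.div_mul_cancel (ne_of_gt h0) (ne_of_lt htop))
      · rw [Set.indicator_of_notMem hp, hGapp, hFzero p hp]
        simp
    calc ∫⁻ p, ∫⁻ x, (S x).indicator G p ∂γB ∂μB
        = ∫⁻ p, G p * γB (ball p.1 p.2) ∂μB := lintegral_congr hinner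
      _ ≤ ∫⁻ p, (tentSet m B).indicator F p ∂μB := lintegral_mono hptle
      _ ≤ ∫⁻ p, (tentSet m B).indicator F p ∂(planeMeasure γ) := lintegral_mono' hle le_rfl
      _ ≤ ∫⁻ p in tentSet m B, F p ∂(planeMeasure γ) := lintegral_indicator_le _ _
  -- assemble
  calc ∫⁻ x, Afun γ m q 1 f x ∂γ
      ≤ ∫⁻ x, I x ^ (1/q) ∂γB := step1
    _ ≤ γ B ^ (1 - 1/q) * (∫⁻ x, I x ∂γB) ^ (1/q) := step2
    _ ≤ γ B ^ (1 - 1/q) *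
        (∫⁻ p in tentSet m B, F p ∂(planeMeasure γ)) ^ (1/q) :=
        mul_le_mul_right (ENNReal.rpow_le_rpow step3 (le_of_lt hinvq)) _
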